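/- Correctly specified noise makes f* a global maximizer: suppose the noise Y - f*(X) has density c_σ·p_σ(·) independent of X, where p_σ is even, integrable, and square integrable. Define V(s) = ∫ p_σ(t-s)p_σ(t)dt. Then 𝒢_σ(f) = c_σ·∫_𝒳 V(f(x) - f*(x)) dρ_X(x), V(s) ≤ V(0) for all s, and hence 𝒢_σ(f) ≤ 𝒢_σ(f*) for every bounded measurable f. -/

import Mathlib

open MeasureTheory Filter Topology

/-- Correctly specified noise makes `f*` a global maximizer: if the conditional
density of `Y` given `X = x` is `c·p(· - f*(x))` with `p` even, integrable and
square integrable, then with `V(s) = ∫ p(t-s)p(t)dt` one has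
`𝒢_σ(f) = c ∫ V(f(x)-f*(x)) dρ_X`, `V(s) ≤ V(0)`, and `𝒢_σ(f) ≤ 𝒢_σ(f*)` for
every bounded measurable `f`. -/
theorem stmt15 {Ω 𝒳 : Type*} [MeasurableSpace Ω] [MeasurableSpace 𝒳]
    (μ : Measure Ω) [IsProbabilityMeasure μ]
    (X : Ω → 𝒳) (Y : Ω → ℝ) (hX : Measurable X) (hY : Measurable Y)
    (fstar : 𝒳 → ℝ) (hfstar : Measurable fstar) (Mstar : ℝ)
    (hfstarB : ∀ x, |fstar x| ≤ Mstar)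
    (p : ℝ → ℝ) (c : ℝ) (hc : 0 < c)
    (hp_nonneg : ∀ t, 0 ≤ p t) (hp_even : ∀ t, p (-t) = p t)
    (hp_int : Integrable p) (hp_sq : MemLp p 2 volume)
    (hp_norm : ∫ t, c * p t = 1)
    (hdens : ∀ φ : 𝒳 → ℝ → ℝ, Measurable (Function.uncurry φ) →
      (∃ C, ∀ x y, |φ x y| ≤ C) →
      ∫ ω, φ (X ω) (Y ω) ∂μ =
        ∫ x, (∫ y, φ x y * (c * p (y - fstar x))) ∂(μ.map X)) :
    (∀ f : 𝒳 → ℝ, Measurable f → (∃ C, ∀ x, |f x| ≤ C) →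
        ∫ ω, p (Y ω - f (X ω)) ∂μ =
          c * ∫ x, (∫ t, p (t - (f x - fstar x)) * p t) ∂(μ.map X)) ∧
      (∀ s : ℝ, (∫ t, p (t - s) * p t) ≤ ∫ t, p (t - 0) * p t) ∧
        ∀ f : 𝒳 → ℝ, Measurable f → (∃ C, ∀ x, |f x| ≤ C) →
          ∫ ω, p (Y ω - f (X ω)) ∂μ ≤ ∫ ω, p (Y ω - fstar (X ω)) ∂μ := by
  classical
  haveI hρprob : IsProbabilityMeasure (μ.map X) := Measure.isProbabilityMeasure_map hX.aemeasurable
  -- a measurable, nonnegative version of `p`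
  obtain ⟨q, hq_meas, hq0, hqp⟩ :
      ∃ q : ℝ → ℝ, Measurable q ∧ (∀ t, 0 ≤ q t) ∧ q =ᵐ[volume] p := by
    refine ⟨fun t => max (hp_int.1.mk p t) 0,
      hp_int.1.stronglyMeasurable_mk.measurable.max measurable_const,
      fun t => le_max_right _ _, ?_⟩
    filter_upwards [hp_int.1.ae_eq_mk] with t ht
    rw [← ht]; exact max_eq_left (hp_nonneg t)
  have hqp_shift : ∀ a : ℝ, (fun t => q (t - a)) =ᵐ[volume] (fun t => p (t - a)) :=
    fun a => hqp.comp_tendsto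
      (measurePreserving_sub_right volume a).quasiMeasurePreserving.tendsto_ae
  have hq2 : MemLp q 2 volume := hp_sq.ae_eq hqp.symm
  have hq2shift : ∀ a : ℝ, MemLp (fun t => q (t - a)) 2 volume :=
    fun a => hq2.comp_measurePreserving (measurePreserving_sub_right volume a)
  have hK0 : 0 ≤ ∫ t, q t * q t := integral_nonneg fun t => mul_nonneg (hq0 t) (hq0 t)
  -- products of translates of `q` are integrable
  have hprod_int : ∀ a b : ℝ, Integrable (fun t => q (t - a) * q (t - b)) volume := by
    intro a b
    have h : MemLp ((fun t => q (t - a)) • (fun t => q (t - b))) 1 volume :=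
      (hq2shift b).smul (hq2shift a)
    rw [memLp_one_iff_integrable] at h
    exact h.congr (ae_of_all _ fun t => by simp [smul_eq_mul])
  -- Cauchy-Schwarz bound
  have hCS : ∀ s : ℝ, (∫ t, q (t - s) * q t) ≤ ∫ t, q t * q t := by
    intro s
    have hpq2 : Real.HolderConjugate 2 2 := Real.HolderConjugate.two_two
    have h2 : ENNReal.ofReal (2 : ℝ) = 2 := by norm_num
    have hrp : ∀ x : ℝ, x ^ (2 : ℝ) = x * x := fun x => by
      rw [show (2 : ℝ) = ((2 : ℕ) : ℝ) by norm_num, Real.rpow_natCast]; ring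
    have hmem1 : MemLp (fun t => q (t - s)) (ENNReal.ofReal 2) volume := by
      rw [h2]; exact hq2shift s
    have hmem2 : MemLp q (ENNReal.ofReal 2) volume := by rw [h2]; exact hq2
    have h := integral_mul_le_Lp_mul_Lq_of_nonneg hpq2
      (ae_of_all _ fun t => hq0 _) (ae_of_all _ fun t => hq0 t) hmem1 hmem2
    have hsq : (∫ t, q (t - s) ^ (2 : ℝ)) = ∫ t, q t ^ (2 : ℝ) :=
      integral_sub_right_eq_self (fun t => q t ^ (2 : ℝ)) s
    have hKrw : (∫ t, q t ^ (2 : ℝ)) = ∫ t, q t * q t := by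
      simp_rw [hrp]
    calc (∫ t, q (t - s) * q t)
        ≤ (∫ t, q (t - s) ^ (2:ℝ)) ^ ((1:ℝ)/2) * (∫ t, q t ^ (2:ℝ)) ^ ((1:ℝ)/2) := h
      _ = (∫ t, q t * q t) ^ ((1:ℝ)/2) * (∫ t, q t * q t) ^ ((1:ℝ)/2) := by
          rw [hsq, hKrw]
      _ = ∫ t, q t * q t := by
          rw [← Real.rpow_add' hK0 (by norm_num)]; norm_num
  have hCS2 : ∀ a b : ℝ, (∫ t, q (t - a) * q (t - b)) ≤ ∫ t, q t * q t := by
    intro a b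
    have h1 : (fun t => q (t - a) * q (t - b))
        = fun t => (fun u => q (u - (a - b)) * q u) (t - b) := by
      funext t
      simp only []
      rw [show t - b - (a - b) = t - a by ring]
    calc (∫ t, q (t - a) * q (t - b))
        = ∫ t, (fun u => q (u - (a - b)) * q u) (t - b) := by rw [h1]
      _ = ∫ t, q (t - (a - b)) * q t :=
          integral_sub_right_eq_self (fun u => q (u - (a - b)) * q u) b
      _ ≤ ∫ t, q t * q t := hCS (a - b)
  -- translate integrals of `p` to integrals of `q`
  have hV : ∀ s : ℝ, (∫ t, p (t - s) * p t) = ∫ t, q (t - s) * q t := by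
    intro s
    refine integral_congr_ae ?_
    filter_upwards [hqp, hqp_shift s] with t h1 h2
    rw [← h1, ← h2]
  -- transfer `p` to `q` under `μ`
  have htrans : ∀ f : 𝒳 → ℝ, Measurable f →
      ∫ ω, p (Y ω - f (X ω)) ∂μ = ∫ ω, q (Y ω - f (X ω)) ∂μ := by
    intro f hf
    have hSnull : volume {t : ℝ | ¬ q t = p t} = 0 := ae_iff.mp hqp
    set E := toMeasurable volume {t : ℝ | ¬ q t = p t} with hE
    have hEmeas : MeasurableSet E := measurableSet_toMeasurable _ _
    have hEnull : volume E = 0 := by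
      rw [hE, measure_toMeasurable]; exact hSnull
    have hSE : {t : ℝ | ¬ q t = p t} ⊆ E := subset_toMeasurable _ _
    have h := hdens (fun x y => E.indicator (fun _ => (1:ℝ)) (y - f x))
      ((measurable_const.indicator hEmeas).comp (measurable_snd.sub (hf.comp measurable_fst)))
      ⟨1, fun x y => by
        by_cases hmem : (y - f x) ∈ E <;>
          simp [Set.indicator_of_mem, Set.indicator_of_notMem, hmem]⟩
    have hRHS : ∫ x, (∫ y, E.indicator (fun _ => (1:ℝ)) (y - f x) * (c * p (y - fstar x)))
        ∂(μ.map X) = 0 := by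
      have hzero : ∀ x, (∫ y, E.indicator (fun _ => (1:ℝ)) (y - f x) * (c * p (y - fstar x))) = 0 := by
        intro x
        have hnullx : volume ((fun y : ℝ => y - f x) ⁻¹' E) = 0 := by
          rw [(measurePreserving_sub_right volume (f x)).measure_preimage
            hEmeas.nullMeasurableSet]
          exact hEnull
        refine integral_eq_zero_of_ae ?_
        have hnotmem : ∀ᵐ y : ℝ, (y - f x) ∉ E := by
          rw [ae_iff]
          simpa [Set.preimage, Set.mem_setOf_eq, not_not] using hnullx
        filter_upwards [hnotmem] with y hy
        simp [Set.indicator_of_notMem hy]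
      simp only [hzero, integral_zero]
    rw [hRHS] at h
    have hind_int : Integrable (fun ω => E.indicator (fun _ => (1:ℝ)) (Y ω - f (X ω))) μ := by
      refine Integrable.mono (integrable_const (1:ℝ))
        (((measurable_const.indicator hEmeas).comp (hY.sub (hf.comp hX))).aestronglyMeasurable)
        (ae_of_all _ fun ω => ?_)
      by_cases hmem : (Y ω - f (X ω)) ∈ E <;> simp [hmem]
    have hae0 : (fun ω => E.indicator (fun _ => (1:ℝ)) (Y ω - f (X ω))) =ᵐ[μ] 0 :=
      (integral_eq_zero_iff_of_nonneg
        (fun ω => Set.indicator_nonneg (fun _ _ => zero_le_one) _) hind_int).mp h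
    refine integral_congr_ae ?_
    filter_upwards [hae0] with ω hω
    by_cases hmem : (Y ω - f (X ω)) ∈ E
    · exfalso
      simp only [Set.indicator_of_mem hmem, Pi.zero_apply] at hω
      exact one_ne_zero hω
    · have hqe : q (Y ω - f (X ω)) = p (Y ω - f (X ω)) :=
        not_not.mp (fun hS => hmem (hSE hS))
      exact hqe.symm
  -- the main identity, for `q`
  have keyq : ∀ f : 𝒳 → ℝ, Measurable f → (∃ C, ∀ x, |f x| ≤ C) →
      ∫ ω, q (Y ω - f (X ω)) ∂μ =
        c * ∫ x, (∫ t, q (t - (f x - fstar x)) * q t) ∂(μ.map X) := by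
    intro f hf hfB
    set qn : ℕ → ℝ → ℝ := fun n t => min (q t) n with hqn_def
    have hqn_meas : ∀ n, Measurable (qn n) := fun n => hq_meas.min measurable_const
    have hqn_nonneg : ∀ n t, 0 ≤ qn n t := fun n t => le_min (hq0 t) (Nat.cast_nonneg n)
    have hqn_le : ∀ n t, qn n t ≤ q t := fun n t => min_le_left _ _
    have hqn_bdd : ∀ (n : ℕ) (t : ℝ), |qn n t| ≤ (n : ℝ) := fun n t =>
      abs_le.2 ⟨le_trans (neg_nonpos.mpr (Nat.cast_nonneg n)) (hqn_nonneg n t), min_le_right _ _⟩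
    have hqn_mono : ∀ t, Monotone (fun n => qn n t) := fun t n m hnm =>
      min_le_min le_rfl (Nat.cast_le.2 hnm)
    have hqn_tendsto : ∀ t, Tendsto (fun n => qn n t) atTop (𝓝 (q t)) := by
      intro t
      obtain ⟨N, hN⟩ := exists_nat_ge (q t)
      exact tendsto_atTop_of_eventually_const (i₀ := N)
        fun n hn => min_eq_left (hN.trans (Nat.cast_le.2 hn))
    set I : ℕ → 𝒳 → ℝ := fun n x => ∫ y, qn n (y - f x) * (c * q (y - fstar x)) with hI_def
    set J : 𝒳 → ℝ := fun x => ∫ y, q (y - f x) * (c * q (y - fstar x)) with hJ_def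
    -- integrability of inner integrands
    have hint_shift2 : ∀ a b : ℝ, Integrable (fun y => q (y - a) * (c * q (y - b))) volume := by
      intro a b
      exact ((hprod_int a b).const_mul c).congr (ae_of_all _ fun y => by ring)
    have hIn_int : ∀ (n : ℕ) (x : 𝒳),
        Integrable (fun y => qn n (y - f x) * (c * q (y - fstar x))) volume := by
      intro n x
      refine Integrable.mono (hint_shift2 (f x) (fstar x))
        (((hqn_meas n).comp (measurable_id.sub measurable_const)).mul
          ((hq_meas.comp (measurable_id.sub measurable_const)).const_mul c)).aestronglyMeasurable
        (ae_of_all _ fun y => ?_)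
      rw [Real.norm_of_nonneg (mul_nonneg (hqn_nonneg _ _) (mul_nonneg hc.le (hq0 _))),
        Real.norm_of_nonneg (mul_nonneg (hq0 _) (mul_nonneg hc.le (hq0 _)))]
      exact mul_le_mul_of_nonneg_right (hqn_le _ _) (mul_nonneg hc.le (hq0 _))
    -- hdens applied to the truncations
    have hdens_n : ∀ n : ℕ, ∫ ω, qn n (Y ω - f (X ω)) ∂μ = ∫ x, I n x ∂(μ.map X) := by
      intro n
      have h := hdens (fun x y => qn n (y - f x))
        (((hqn_meas n).comp (measurable_snd.sub (hf.comp measurable_fst))))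
        ⟨(n : ℝ), fun x y => hqn_bdd n _⟩
      rw [h]
      refine integral_congr_ae (ae_of_all _ fun x => ?_)
      refine integral_congr_ae ?_
      filter_upwards [hqp_shift (fstar x)] with y hy
      rw [← hy]
    -- value of J
    have hJx : ∀ x, J x = c * ∫ t, q (t - (f x - fstar x)) * q t := by
      intro x
      have h1 : (fun y => q (y - f x) * (c * q (y - fstar x)))
          = fun y => c * ((fun u => q (u - (f x - fstar x)) * q u) (y - fstar x)) := by
        funext y
        simp only []
        rw [show y - fstar x - (f x - fstar x) = y - f x by ring]
        ring
      rw [hJ_def]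
      simp only []
      rw [h1, integral_const_mul,
        integral_sub_right_eq_self (fun u => q (u - (f x - fstar x)) * q u) (fstar x)]
    have hJ_le : ∀ x, J x ≤ c * ∫ t, q t * q t := fun x => by
      rw [hJx x]
      exact mul_le_mul_of_nonneg_left (hCS (f x - fstar x)) hc.le
    have hInJ : ∀ n x, I n x ≤ J x := by
      intro n x
      exact integral_mono (hIn_int n x) (hint_shift2 (f x) (fstar x))
        fun y => mul_le_mul_of_nonneg_right (hqn_le _ _) (mul_nonneg hc.le (hq0 _))
    have hI_le : ∀ n x, I n x ≤ c * ∫ t, q t * q t := fun n x => (hInJ n x).trans (hJ_le x)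
    have hI_nonneg : ∀ n x, 0 ≤ I n x := fun n x =>
      integral_nonneg fun y => mul_nonneg (hqn_nonneg _ _) (mul_nonneg hc.le (hq0 _))
    have hI_tendsto : ∀ x, Tendsto (fun n => I n x) atTop (𝓝 (J x)) := by
      intro x
      refine integral_tendsto_of_tendsto_of_monotone (fun n => hIn_int n x)
        (hint_shift2 (f x) (fstar x)) ?_ ?_
      · exact ae_of_all _ fun y n m hnm =>
          mul_le_mul_of_nonneg_right (hqn_mono _ hnm) (mul_nonneg hc.le (hq0 _))
      · exact ae_of_all _ fun y => (hqn_tendsto _).mul_const _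
    have hI_meas : ∀ n, AEStronglyMeasurable (I n) (μ.map X) := by
      intro n
      refine StronglyMeasurable.aestronglyMeasurable ?_
      exact MeasureTheory.StronglyMeasurable.integral_prod_right'
        (f := fun z : 𝒳 × ℝ => qn n (z.2 - f z.1) * (c * q (z.2 - fstar z.1)))
        ((((hqn_meas n).comp (measurable_snd.sub (hf.comp measurable_fst))).mul
          ((hq_meas.comp (measurable_snd.sub (hfstar.comp measurable_fst))).const_mul c)).stronglyMeasurable)
    have hRHS_tendsto : Tendsto (fun n => ∫ x, I n x ∂(μ.map X)) atTop
        (𝓝 (∫ x, J x ∂(μ.map X))) := by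
      refine tendsto_integral_of_dominated_convergence (fun _ => c * ∫ t, q t * q t)
        hI_meas (integrable_const _) ?_ (ae_of_all _ fun x => hI_tendsto x)
      intro n
      refine ae_of_all _ fun x => ?_
      rw [Real.norm_of_nonneg (hI_nonneg n x)]
      exact hI_le n x
    -- LHS side
    have hGn_int : ∀ n : ℕ, Integrable (fun ω => qn n (Y ω - f (X ω))) μ := by
      intro n
      refine Integrable.mono (integrable_const (n : ℝ))
        (((hqn_meas n).comp (hY.sub (hf.comp hX))).aestronglyMeasurable)
        (ae_of_all _ fun ω => ?_)
      rw [Real.norm_eq_abs, Real.norm_eq_abs]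
      exact (hqn_bdd n _).trans (le_abs_self _)
    have hG_meas : Measurable (fun ω => q (Y ω - f (X ω))) := hq_meas.comp (hY.sub (hf.comp hX))
    have hG_int : Integrable (fun ω => q (Y ω - f (X ω))) μ := by
      refine ⟨hG_meas.aestronglyMeasurable, ?_⟩
      rw [hasFiniteIntegral_iff_ofReal (ae_of_all _ fun ω => hq0 _)]
      have h2 : ∀ n : ℕ, ∫⁻ ω, ENNReal.ofReal (qn n (Y ω - f (X ω))) ∂μ
          = ENNReal.ofReal (∫ ω, qn n (Y ω - f (X ω)) ∂μ) := fun n =>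
        (ofReal_integral_eq_lintegral_ofReal (hGn_int n)
          (ae_of_all _ fun ω => hqn_nonneg _ _)).symm
      have h3 : Tendsto (fun n => ∫⁻ ω, ENNReal.ofReal (qn n (Y ω - f (X ω))) ∂μ) atTop
          (𝓝 (∫⁻ ω, ENNReal.ofReal (q (Y ω - f (X ω))) ∂μ)) :=
        lintegral_tendsto_of_tendsto_of_monotone
          (fun n => ((hqn_meas n).comp (hY.sub (hf.comp hX))).aemeasurable.ennreal_ofReal)
          (ae_of_all _ fun ω n m h => ENNReal.ofReal_le_ofReal (hqn_mono _ h))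
          (ae_of_all _ fun ω => (ENNReal.continuous_ofReal.tendsto _).comp (hqn_tendsto _))
      have h4 : ∫⁻ ω, ENNReal.ofReal (q (Y ω - f (X ω))) ∂μ
          ≤ ENNReal.ofReal (c * ∫ t, q t * q t) := by
        refine le_of_tendsto' h3 fun n => ?_
        rw [h2 n, hdens_n n]
        refine ENNReal.ofReal_le_ofReal ?_
        calc ∫ x, I n x ∂(μ.map X)
            ≤ ∫ _x, (c * ∫ t, q t * q t) ∂(μ.map X) :=
              integral_mono_of_nonneg (ae_of_all _ fun x => hI_nonneg n x)
                (integrable_const _) (ae_of_all _ fun x => hI_le n x)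
          _ = c * ∫ t, q t * q t := by simp
      exact lt_of_le_of_lt h4 ENNReal.ofReal_lt_top
    have hLHS_tendsto : Tendsto (fun n => ∫ ω, qn n (Y ω - f (X ω)) ∂μ) atTop
        (𝓝 (∫ ω, q (Y ω - f (X ω)) ∂μ)) :=
      integral_tendsto_of_tendsto_of_monotone hGn_int hG_int
        (ae_of_all _ fun ω n m h => hqn_mono _ h)
        (ae_of_all _ fun ω => hqn_tendsto _)
    have hmain : ∫ ω, q (Y ω - f (X ω)) ∂μ = ∫ x, J x ∂(μ.map X) := by
      have h5 := hLHS_tendsto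
      rw [show (fun n => ∫ ω, qn n (Y ω - f (X ω)) ∂μ)
          = fun n => ∫ x, I n x ∂(μ.map X) from funext hdens_n] at h5
      exact tendsto_nhds_unique h5 hRHS_tendsto
    rw [hmain,
      show J = fun x => c * ∫ t, q (t - (f x - fstar x)) * q t from funext hJx]
    exact integral_const_mul c _
  refine ⟨?_, ?_, ?_⟩
  · intro f hf hfB
    rw [htrans f hf, keyq f hf hfB]
    congr 1
    exact integral_congr_ae (ae_of_all _ fun x => (hV (f x - fstar x)).symm)
  · intro s
    rw [hV s, hV 0]
    have h := hCS2 s 0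
    simpa [sub_zero] using h
  · intro f hf hfB
    rw [htrans f hf, htrans fstar hfstar, keyq f hf hfB,
      keyq fstar hfstar ⟨Mstar, hfstarB⟩]
    simp only [sub_self]
    refine mul_le_mul_of_nonneg_left ?_ hc.le
    refine integral_mono_of_nonneg
      (ae_of_all _ fun x => integral_nonneg fun t => mul_nonneg (hq0 _) (hq0 _))
      (integrable_const _) (ae_of_all _ fun x => ?_)
    calc (∫ t, q (t - (f x - fstar x)) * q t)
        ≤ ∫ t, q t * q t := hCS (f x - fstar x)
      _ = ∫ t, q (t - 0) * q t := by simp [sub_zero]
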